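/- Let T be a well generated triangulated category, S ⊆ T a set of objects, α a regular cardinal such that T is α-compactly generated and S ⊆ T^α, and S(α) as in Construction 2.1. Let R ⊆ T be the full subcategory of objects r such that every morphism t → r with t ∈ T^α factors as t → s → r with s ∈ S(α). Then R is closed in T under coproducts: for any set {r_λ, λ ∈ Λ} of objects of R, the coproduct ∐_{λ∈Λ} r_λ belongs to R. -/

import Mathlib

open CategoryTheory CategoryTheory.Limits CategoryTheory.Pretriangulated ZeroObject

universe v u

variable {C : Type u} [Category.{v} C] [Preadditive C] [HasZeroObject C]
  [HasShift C ℤ] [∀ n : ℤ, (CategoryTheory.shiftFunctor C n).Additive] [Pretriangulated C]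
  [IsTriangulated C] [HasCoproducts.{v} C]

/-- A pre-aisle in a triangulated category: a full additive subcategory closed under
suspension, extensions and direct summands. -/
structure IsPreaisle (S : Set C) : Prop where
  zero_mem : (0 : C) ∈ S
  shift_mem : ∀ s ∈ S, (s⟦(1 : ℤ)⟧ : C) ∈ S
  ext_mem : ∀ T : Triangle C, T ∈ (distTriang C) → T.obj₁ ∈ S → T.obj₃ ∈ S → T.obj₂ ∈ S
  summand_mem : ∀ x s : C, s ∈ S → ∀ (i : x ⟶ s) (r : s ⟶ x), i ≫ r = 𝟙 x → x ∈ S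

/-- A cocomplete pre-aisle: a pre-aisle that is moreover closed under all coproducts. -/
def IsCocompletePreaisle (S : Set C) : Prop :=
  IsPreaisle S ∧ ∀ {ι : Type v} (xs : ι → C), (∀ i, xs i ∈ S) → (∐ xs : C) ∈ S

/-- `⟨S⟩^{≤0}`: the smallest cocomplete pre-aisle containing `S`. -/
def aisleGen (S : Set C) : Set C :=
  ⋂₀ {P : Set C | IsCocompletePreaisle P ∧ S ⊆ P}

/-- `A * B`: the class of objects `y` fitting in a distinguished triangle `a ⟶ y ⟶ b ⟶ Σa`
with `a ∈ A` and `b ∈ B`. -/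
def starSet (A B : Set C) : Set C :=
  {y | ∃ (a : C) (_ : a ∈ A) (b : C) (_ : b ∈ B) (f : a ⟶ y) (g : y ⟶ b)
    (h : b ⟶ (a⟦(1 : ℤ)⟧ : C)), Triangle.mk f g h ∈ (distTriang C)}

/-- The class of coproducts of fewer than `α` objects of `A`. -/
def smallCoprodSet (α : Cardinal.{v}) (A : Set C) : Set C :=
  {y | ∃ (ι : Type v) (_ : Cardinal.mk ι < α) (xs : ι → C) (_ : ∀ i, xs i ∈ A),
    Nonempty ((∐ xs : C) ≅ y)}

/-- The class `∪_{j ≥ 0} Σʲ S` of all nonnegative suspensions of objects of `S`. -/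
def suspSet (S : Set C) : Set C :=
  {y | ∃ (j : ℕ) (x : C), x ∈ S ∧ y = (x⟦(j : ℤ)⟧ : C)}

/-- Construction 2.1, by transfinite induction (with the indexing shifted by one:
`SClass α S 0` is the paper's `S(1)`): the base stage consists of the coproducts of fewer
than `α` objects of `∪_j Σʲ S`; the stage at a successor consists of the coproducts of
fewer than `α` objects of `S(i) * S(i)`; and the stage at a limit ordinal is the union of
the earlier stages. -/
noncomputable def SClass (α : Cardinal.{v}) (S : Set C) (i : Ordinal.{v}) : Set C :=
  Ordinal.limitRecOn i (smallCoprodSet α (suspSet S))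
    (fun _ prev => smallCoprodSet α (starSet prev prev))
    (fun o _ ih => {y | ∃ (o' : Ordinal.{v}) (h : o' < o), y ∈ ih o' h})

/-- The paper's `S(α)`: the stage of Construction 2.1 at the ordinal `α`. -/
noncomputable def SAlpha (α : Cardinal.{v}) (S : Set C) : Set C :=
  SClass α S (Cardinal.ord α)

/-- Data exhibiting the triangulated category `C` as `α`-compactly generated, `compacts`
playing the role of the subcategory `T^α` of `α`-compact objects: an essentially small
triangulated subcategory, closed under coproducts of fewer than `α` objects, generating,
and such that any morphism from one of its objects to a coproduct factors through a
sub-coproduct of fewer than `α` of the summands via `α`-compact intermediaries. -/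
structure AlphaCompactGeneration (α : Cardinal.{v}) where
  compacts : Set C
  zero_mem : (0 : C) ∈ compacts
  iso_mem : ∀ x y : C, x ∈ compacts → (x ≅ y) → y ∈ compacts
  shift_mem : ∀ x ∈ compacts, ∀ n : ℤ, (x⟦n⟧ : C) ∈ compacts
  cone_mem : ∀ T : Triangle C, T ∈ (distTriang C) → T.obj₁ ∈ compacts →
    T.obj₂ ∈ compacts → T.obj₃ ∈ compacts
  smallCoprod_mem : ∀ {ι : Type v}, Cardinal.mk ι < α → ∀ xs : ι → C,
    (∀ i, xs i ∈ compacts) → (∐ xs : C) ∈ compacts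
  essentiallySmall : ∃ (ι : Type v) (f : ι → C), ∀ x ∈ compacts, ∃ i, Nonempty (x ≅ f i)
  factor : ∀ t ∈ compacts, ∀ {ι : Type v} (xs : ι → C) (f : t ⟶ ∐ xs),
    ∃ (J : Set ι) (_ : Cardinal.mk J < α) (ts : ι → C) (_ : ∀ i, ts i ∈ compacts)
      (_ : ∀ i ∉ J, IsZero (ts i)) (g : t ⟶ ∐ ts) (fs : ∀ i, ts i ⟶ xs i),
      f = g ≫ Limits.Sigma.map fs
  generating : ∀ x : C, (∀ t ∈ compacts, ∀ f : t ⟶ x, f = 0) → IsZero x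


section Aux

variable (α : Cardinal.{v}) (S : Set C)

lemma SClass_succ (o : Ordinal.{v}) :
    SClass (C := C) α S (Order.succ o) =
      smallCoprodSet α (starSet (SClass α S o) (SClass α S o)) := by
  simp only [SClass, Ordinal.limitRecOn_succ]

lemma mem_SClass_limit {o : Ordinal.{v}} (ho : Order.IsSuccLimit o) (y : C) :
    y ∈ SClass α S o ↔ ∃ (o' : Ordinal.{v}), o' < o ∧ y ∈ SClass α S o' := by
  show y ∈ SClass (C := C) α S o ↔ _
  rw [SClass, Ordinal.limitRecOn_limit _ _ _ _ ho]
  exact ⟨fun ⟨o', h, hy⟩ => ⟨o', h, hy⟩, fun ⟨o', h, hy⟩ => ⟨o', h, hy⟩⟩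

lemma zero_mem_smallCoprodSet (hα : 0 < α) (A : Set C) :
    (0 : C) ∈ smallCoprodSet α A := by
  refine ⟨PEmpty.{v+1}, by simpa using hα, fun i => i.elim, fun i => i.elim, ⟨?_⟩⟩
  refine Limits.IsZero.isoZero ?_
  rw [IsZero.iff_id_eq_zero]
  apply Sigma.hom_ext
  rintro ⟨⟩

lemma self_mem_smallCoprodSet (hα : 1 < α) {A : Set C} {y : C} (hy : y ∈ A) :
    y ∈ smallCoprodSet α A := by
  refine ⟨PUnit.{v+1}, by simpa using hα, fun _ => y, fun _ => hy, ⟨?_⟩⟩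
  exact
    { hom := Sigma.desc fun _ => 𝟙 y
      inv := Sigma.ι (fun _ : PUnit.{v+1} => y) PUnit.unit
      hom_inv_id := by
        apply Sigma.hom_ext
        rintro ⟨⟩
        simp
      inv_hom_id := by simp }

lemma self_mem_starSet {A B : Set C} {y : C} (hy : y ∈ A) (h0 : (0 : C) ∈ B) :
    y ∈ starSet A B := by
  exact ⟨y, hy, 0, h0, 𝟙 y, 0, 0, contractible_distinguished y⟩

lemma zero_mem_SClass (hα : Cardinal.aleph0 ≤ α) (o : Ordinal.{v}) :
    (0 : C) ∈ SClass α S o := by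
  induction o using Ordinal.induction with
  | h o IH =>
    rcases Ordinal.zero_or_succ_or_isSuccLimit o with h0 | ⟨a, ha⟩ | hl
    · subst h0
      show (0 : C) ∈ SClass (C := C) α S 0
      rw [SClass, Ordinal.limitRecOn_zero]
      exact zero_mem_smallCoprodSet α (lt_of_lt_of_le Cardinal.aleph0_pos hα) _
    · subst ha
      rw [SClass_succ]
      exact zero_mem_smallCoprodSet α (lt_of_lt_of_le Cardinal.aleph0_pos hα) _
    · rw [mem_SClass_limit α S hl]
      exact ⟨0, hl.pos, IH 0 hl.pos⟩

lemma SClass_mono (hα : Cardinal.aleph0 ≤ α) :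
    ∀ {o o' : Ordinal.{v}}, o ≤ o' → SClass (C := C) α S o ⊆ SClass α S o' := by
  have h1 : (1 : Cardinal.{v}) < α := lt_of_lt_of_le Cardinal.one_lt_aleph0 hα
  intro o o' h
  induction o' using Ordinal.induction with
  | h o' IH =>
    rcases eq_or_lt_of_le h with rfl | hlt
    · exact subset_rfl
    rcases Ordinal.zero_or_succ_or_isSuccLimit o' with h0 | ⟨a, ha⟩ | hl
    · subst h0
      exact absurd hlt (not_lt_zero (a := o))
    · subst ha
      have hsub : SClass (C := C) α S o ⊆ SClass α S a :=
        IH a (Order.lt_succ a) (Order.lt_succ_iff.mp hlt)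
      intro y hy
      rw [SClass_succ]
      exact self_mem_smallCoprodSet α h1
        (self_mem_starSet (hsub hy) (zero_mem_SClass α S hα a))
    · intro y hy
      rw [mem_SClass_limit α S hl]
      exact ⟨o, hlt, hy⟩

/-- `S(α)` is closed under coproducts of fewer than `α` objects. -/
lemma smallCoprod_mem_SAlpha (hα : α.IsRegular) {ι : Type v}
    (hι : Cardinal.mk ι < α) (xs : ι → C) (hxs : ∀ i, xs i ∈ SAlpha α S) :
    (∐ xs : C) ∈ SAlpha α S := by
  have hord : Order.IsSuccLimit (Cardinal.ord α) := Cardinal.isSuccLimit_ord hα.aleph0_le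
  have hx : ∀ i, ∃ o < Cardinal.ord α, xs i ∈ SClass α S o := by
    intro i
    have := (mem_SClass_limit α S hord (xs i)).mp (hxs i)
    exact ⟨this.choose, this.choose_spec.1, this.choose_spec.2⟩
  choose o ho hm using hx
  have hsup : (⨆ i, o i) < Cardinal.ord α :=
    Cardinal.iSup_lt_ord_of_isRegular hα hι ho
  have hmono : ∀ i, xs i ∈ SClass α S (⨆ i, o i) := fun i =>
    SClass_mono α S hα.aleph0_le (Ordinal.le_iSup o i) (hm i)
  have hmem : (∐ xs : C) ∈ SClass α S (Order.succ (⨆ i, o i)) := by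
    rw [SClass_succ]
    exact ⟨ι, hι, xs, fun i =>
      self_mem_starSet (hmono i) (zero_mem_SClass α S hα.aleph0_le _), ⟨Iso.refl _⟩⟩
  exact SClass_mono α S hα.aleph0_le (Order.succ_le_of_lt hsup) hmem

end Aux

/-- the full subcategory `R` of objects `r` such that every morphism
`t ⟶ r` with `t ∈ T^α` factors through an object of `S(α)` is closed under coproducts. -/
theorem statement14 (α : Cardinal.{v}) (hα : α.IsRegular)
    (G : AlphaCompactGeneration (C := C) α) (S : Set C) (hS : S ⊆ G.compacts)
    {Λ : Type v} (r : Λ → C)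
    (hr : ∀ l : Λ, ∀ t ∈ G.compacts, ∀ f : t ⟶ r l,
      ∃ (s : C) (_ : s ∈ SAlpha α S) (g : t ⟶ s) (h : s ⟶ r l), f = g ≫ h) :
    ∀ t ∈ G.compacts, ∀ f : t ⟶ ∐ r,
      ∃ (s : C) (_ : s ∈ SAlpha α S) (g : t ⟶ s) (h : s ⟶ ∐ r), f = g ≫ h := by
  classical
  intro t ht f
  obtain ⟨J, hJ, ts, hts, htz, g0, fs, hf⟩ := G.factor t ht r f
  -- choose factorizations for indices in J
  have hch : ∀ j : J, ∃ (s : C) (_ : s ∈ SAlpha α S) (g : ts j.1 ⟶ s) (h : s ⟶ r j.1),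
      fs j.1 = g ≫ h := fun j => hr j.1 (ts j.1) (hts j.1) (fs j.1)
  choose s hs gmap hmap hfac using hch
  have hsmem : (∐ s : C) ∈ SAlpha α S := smallCoprod_mem_SAlpha α S hα hJ s hs
  refine ⟨∐ s, hsmem, g0 ≫ Sigma.desc (fun i =>
      if h : i ∈ J then gmap ⟨i, h⟩ ≫ Sigma.ι s ⟨i, h⟩ else 0),
    Sigma.desc (fun j => hmap j ≫ Sigma.ι r j.1), ?_⟩
  rw [hf, Category.assoc]
  congr 1
  apply Sigma.hom_ext
  intro i
  by_cases h : i ∈ J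
  · have := hfac ⟨i, h⟩
    simp only [Set.coe_setOf] at this ⊢
    simp [h, this]
  · have hz : fs i = 0 := (htz i h).eq_of_src _ _
    simp [h, hz]
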